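/- Let sigma be an ordering of the vertices of a hypergraph H and sigma' be obtained by swapping vertices u and v with p = sigma(u) < sigma(v) = q. If r_{sigma'}(p) > r_sigma(p) and r_{sigma'}(i) <= r_sigma(i) for all p < i <= q, then the total cost of sigma' is strictly smaller than that of sigma. -/

import Mathlib

open Finset

/-- Position at which hyperedge `e` is first hit by the ordering `σ`. -/
noncomputable def firstHit {α : Type*} (σ : α → ℕ) (e : Finset α) : ℕ :=
  sInf (σ '' ↑e)

/-- Total cost of an ordering: each edge pays the position of its first vertex. -/
noncomputable def totalCost {α : Type*} (E : Finset (Finset α)) (σ : α → ℕ) : ℕ :=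
  ∑ e ∈ E, firstHit σ e

open scoped Classical in
/-- Effective coverage of position `i`: the number of edges first hit at `i`. -/
noncomputable def coverage {α : Type*} (E : Finset (Finset α)) (σ : α → ℕ) (i : ℕ) : ℕ :=
  (E.filter fun e => firstHit σ e = i).card

/-- An ordering of the vertex set `V`: a bijection onto positions `{1, ..., |V|}`. -/
def IsOrdering {α : Type*} (V : Finset α) (σ : α → ℕ) : Prop :=
  Set.BijOn σ ↑V (Set.Icc 1 V.card)

lemma firstHit_mem {α : Type*} (σ : α → ℕ) {e : Finset α} (he : e.Nonempty) :
    firstHit σ e ∈ σ '' ↑e :=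
  Nat.sInf_mem ((Finset.coe_nonempty.mpr he).image σ)

lemma firstHit_le {α : Type*} (σ : α → ℕ) {e : Finset α} {x : α} (hx : x ∈ e) :
    firstHit σ e ≤ σ x :=
  Nat.sInf_le ⟨x, Finset.mem_coe.mpr hx, rfl⟩

/-- Swapping two vertices `u, v` (with `σ u < σ v`) in an ordering: if the swap strictly
increases the effective coverage at position `σ u` and does not increase the coverage at
any position in `(σ u, σ v]`, then the new ordering has strictly smaller total cost. -/
theorem stmt_14 {α : Type*} [DecidableEq α] (V : Finset α) (E : Finset (Finset α))
    (hE : ∀ e ∈ E, e.Nonempty ∧ e ⊆ V)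
    (σ : α → ℕ) (hσ : IsOrdering V σ)
    (u v : α) (hu : u ∈ V) (hv : v ∈ V) (huv : σ u < σ v)
    (h1 : coverage E σ (σ u) < coverage E (σ ∘ Equiv.swap u v) (σ u))
    (h2 : ∀ i, σ u < i → i ≤ σ v →
      coverage E (σ ∘ Equiv.swap u v) i ≤ coverage E σ i) :
    totalCost E (σ ∘ Equiv.swap u v) < totalCost E σ := by
  classical
  set σ' := σ ∘ Equiv.swap u v with hσ'def
  set p := σ u with hpdef
  set q := σ v with hqdef
  set n := V.card with hndef
  have hσ'u : σ' u = q := by simp [hσ'def, Equiv.swap_apply_left, hqdef]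
  have hσ'v : σ' v = p := by simp [hσ'def, Equiv.swap_apply_right, hpdef]
  have hσ'other : ∀ x, x ≠ u → x ≠ v → σ' x = σ x := by
    intro x hxu hxv
    simp [hσ'def, Equiv.swap_apply_of_ne_of_ne hxu hxv]
  have hp1 : 1 ≤ p := (hσ.1 hu).1
  have hqn : q ≤ n := (hσ.1 hv).2
  have hσn : ∀ x ∈ V, σ x ≤ n := fun x hx => (hσ.1 hx).2
  have hσ'n : ∀ x ∈ V, σ' x ≤ n := by
    intro x hx
    rcases eq_or_ne x u with rfl | hxu
    · rw [hσ'u]; exact hqn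
    rcases eq_or_ne x v with rfl | hxv
    · rw [hσ'v]; omega
    · rw [hσ'other x hxu hxv]; exact hσn x hx
  have hfle : ∀ (τ : α → ℕ), (∀ x ∈ V, τ x ≤ n) → ∀ e ∈ E, firstHit τ e ≤ n := by
    intro τ hτ e he
    obtain ⟨hne, hsub⟩ := hE e he
    obtain ⟨x, hx⟩ := hne
    exact le_trans (firstHit_le τ hx) (hτ x (hsub hx))
  have hσfhn : ∀ e ∈ E, firstHit σ e ≤ n := hfle σ hσn
  have hσ'fhn : ∀ e ∈ E, firstHit σ' e ≤ n := hfle σ' hσ'n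
  -- key structural lemma
  have key : ∀ e ∈ E, firstHit σ' e = firstHit σ e ∨
      (p ≤ firstHit σ e ∧ firstHit σ e ≤ q ∧ p ≤ firstHit σ' e ∧ firstHit σ' e ≤ q) := by
    intro e he
    obtain ⟨hne, -⟩ := hE e he
    set m := firstHit σ e with hm
    set m' := firstHit σ' e with hm'
    have hm_mem : m ∈ σ '' ↑e := firstHit_mem σ hne
    have hm'_mem : m' ∈ σ' '' ↑e := firstHit_mem σ' hne
    by_cases hc1 : m < p
    · left
      obtain ⟨x, hx, hxm⟩ := hm_mem
      have hxu : x ≠ u := by intro h; subst h; omega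
      have hxv : x ≠ v := by intro h; subst h; omega
      have hle1 : m' ≤ m := by
        have := firstHit_le σ' (Finset.mem_coe.mp hx)
        rw [hσ'other x hxu hxv, hxm] at this
        exact this
      have hle2 : m ≤ m' := by
        obtain ⟨y, hy, hym⟩ := hm'_mem
        rcases eq_or_ne y u with rfl | hyu
        · rw [hσ'u] at hym; omega
        rcases eq_or_ne y v with rfl | hyv
        · rw [hσ'v] at hym; omega
        · have := firstHit_le σ (Finset.mem_coe.mp hy)
          rw [hσ'other y hyu hyv] at hym
          omega
      omega
    by_cases hc2 : m' < p
    · exfalso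
      obtain ⟨x, hx, hxm⟩ := hm'_mem
      have hxu : x ≠ u := by intro h; subst h; rw [hσ'u] at hxm; omega
      have hxv : x ≠ v := by intro h; subst h; rw [hσ'v] at hxm; omega
      have := firstHit_le σ (Finset.mem_coe.mp hx)
      rw [hσ'other x hxu hxv] at hxm
      omega
    by_cases hc3 : q < m
    · left
      have hue : u ∉ e := by
        intro h
        have := firstHit_le σ h
        omega
      have hve : v ∉ e := by
        intro h
        have := firstHit_le σ h
        omega
      have himg : σ' '' ↑e = σ '' ↑e := by
        apply Set.image_congr
        intro x hx
        exact hσ'other x (fun h => hue (h ▸ Finset.mem_coe.mp hx))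
          (fun h => hve (h ▸ Finset.mem_coe.mp hx))
      rw [hm', hm, firstHit, firstHit, himg]
    by_cases hc4 : q < m'
    · left
      have hue : u ∉ e := by
        intro h
        have := firstHit_le σ' h
        rw [hσ'u] at this; omega
      have hve : v ∉ e := by
        intro h
        have := firstHit_le σ' h
        rw [hσ'v] at this; omega
      have himg : σ' '' ↑e = σ '' ↑e := by
        apply Set.image_congr
        intro x hx
        exact hσ'other x (fun h => hue (h ▸ Finset.mem_coe.mp hx))
          (fun h => hve (h ▸ Finset.mem_coe.mp hx))
      rw [hm', hm, firstHit, firstHit, himg]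
    · right; omega
  -- coverage agrees outside [p, q]
  have hcov_eq : ∀ i, i ∉ Finset.Icc p q → coverage E σ' i = coverage E σ i := by
    intro i hi
    rw [Finset.mem_Icc] at hi
    push_neg at hi
    unfold coverage
    congr 1
    apply Finset.filter_congr
    intro e he
    rcases key e he with h | ⟨ha, hb, hc, hd⟩
    · rw [h]
    · constructor <;> intro h <;> omega
  -- total cost as weighted sum of coverages
  have hTC : ∀ τ : α → ℕ, (∀ e ∈ E, firstHit τ e ≤ n) →
      totalCost E τ = ∑ i ∈ Finset.range (n + 1), i * coverage E τ i := by
    intro τ hτ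
    rw [totalCost, ← Finset.sum_fiberwise_of_maps_to
      (g := fun e => firstHit τ e)
      (fun e he => Finset.mem_range.mpr (Nat.lt_succ_of_le (hτ e he)))]
    refine Finset.sum_congr rfl fun i _ => ?_
    rw [coverage]
    rw [Finset.sum_congr rfl (fun e he => (Finset.mem_filter.mp he).2),
      Finset.sum_const, smul_eq_mul, mul_comm]
  -- total number of edges as sum of coverages
  have hCard : ∀ τ : α → ℕ, (∀ e ∈ E, firstHit τ e ≤ n) →
      E.card = ∑ i ∈ Finset.range (n + 1), coverage E τ i := by
    intro τ hτ
    exact Finset.card_eq_sum_card_fiberwise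
      (fun e he => Finset.mem_range.mpr (Nat.lt_succ_of_le (hτ e he)))
  have hIccsub : Finset.Icc p q ⊆ Finset.range (n + 1) := by
    intro i hi
    rw [Finset.mem_Icc] at hi
    exact Finset.mem_range.mpr (by omega)
  -- the sum of coverage differences over [p,q] is zero
  have hzero : ∑ i ∈ Finset.Icc p q, ((coverage E σ' i : ℤ) - coverage E σ i) = 0 := by
    have hall : ∑ i ∈ Finset.range (n + 1), ((coverage E σ' i : ℤ) - coverage E σ i) = 0 := by
      rw [Finset.sum_sub_distrib, ← Nat.cast_sum, ← Nat.cast_sum,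
        ← hCard σ' hσ'fhn, ← hCard σ hσfhn]
      ring
    rw [← hall]
    apply Finset.sum_subset hIccsub
    intro i _ hni
    rw [hcov_eq i hni]
    ring
  -- the cost difference
  have hdiff : (totalCost E σ' : ℤ) - totalCost E σ
      = ∑ i ∈ Finset.Icc p q, ((i : ℤ) - p) * ((coverage E σ' i : ℤ) - coverage E σ i) := by
    have e1 : (totalCost E σ' : ℤ) - totalCost E σ
        = ∑ i ∈ Finset.range (n + 1), (i : ℤ) * ((coverage E σ' i : ℤ) - coverage E σ i) := by
      rw [hTC σ hσfhn, hTC σ' hσ'fhn]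
      push_cast
      rw [← Finset.sum_sub_distrib]
      apply Finset.sum_congr rfl
      intro i _
      ring
    have e2 : ∑ i ∈ Finset.range (n + 1), (i : ℤ) * ((coverage E σ' i : ℤ) - coverage E σ i)
        = ∑ i ∈ Finset.Icc p q, (i : ℤ) * ((coverage E σ' i : ℤ) - coverage E σ i) := by
      symm
      apply Finset.sum_subset hIccsub
      intro i _ hni
      rw [hcov_eq i hni]
      ring
    have e3 : ∑ i ∈ Finset.Icc p q, (i : ℤ) * ((coverage E σ' i : ℤ) - coverage E σ i)
        = ∑ i ∈ Finset.Icc p q, ((i : ℤ) - p) * ((coverage E σ' i : ℤ) - coverage E σ i)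
          + (p : ℤ) * ∑ i ∈ Finset.Icc p q, ((coverage E σ' i : ℤ) - coverage E σ i) := by
      rw [Finset.mul_sum, ← Finset.sum_add_distrib]
      apply Finset.sum_congr rfl
      intro i _
      ring
    rw [e1, e2, e3, hzero, mul_zero, add_zero]
  -- sign facts
  have hDp : (0 : ℤ) < (coverage E σ' p : ℤ) - coverage E σ p := by
    have : (coverage E σ p : ℤ) < coverage E σ' p := by exact_mod_cast h1
    omega
  have hDle : ∀ i, p < i → i ≤ q → (coverage E σ' i : ℤ) - coverage E σ i ≤ 0 := by
    intro i hpi hiq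
    have := h2 i hpi hiq
    have : (coverage E σ' i : ℤ) ≤ coverage E σ i := by exact_mod_cast this
    omega
  -- there is a strictly negative difference in (p, q]
  have hsplit : Finset.Icc p q = insert p (Finset.Icc (p + 1) q) := by
    ext i
    simp only [Finset.mem_Icc, Finset.mem_insert]
    omega
  have hpnotmem : p ∉ Finset.Icc (p + 1) q := by
    simp only [Finset.mem_Icc]
    omega
  have htail : ∑ i ∈ Finset.Icc (p + 1) q, ((coverage E σ' i : ℤ) - coverage E σ i) < 0 := by
    rw [hsplit, Finset.sum_insert hpnotmem] at hzero
    omega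
  have hex : ∃ i ∈ Finset.Icc (p + 1) q, (coverage E σ' i : ℤ) - coverage E σ i < 0 := by
    by_contra h
    push_neg at h
    have := Finset.sum_nonneg h
    omega
  obtain ⟨i0, hi0mem, hi0⟩ := hex
  have hi0' : i0 ∈ Finset.Icc p q := by
    rw [Finset.mem_Icc] at hi0mem ⊢
    omega
  -- the main inequality
  have hneg : ∑ i ∈ Finset.Icc p q, ((i : ℤ) - p) * ((coverage E σ' i : ℤ) - coverage E σ i)
      < 0 := by
    have hlt : ∑ i ∈ Finset.Icc p q, ((i : ℤ) - p) * ((coverage E σ' i : ℤ) - coverage E σ i)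
        < ∑ _i ∈ Finset.Icc p q, (0 : ℤ) := by
      apply Finset.sum_lt_sum
      · intro i hi
        rw [Finset.mem_Icc] at hi
        rcases eq_or_lt_of_le hi.1 with rfl | hpi
        · simp
        · have hD := hDle i hpi hi.2
          have hip : (0 : ℤ) ≤ (i : ℤ) - p := by
            have : (p : ℤ) < i := by exact_mod_cast hpi
            omega
          exact mul_nonpos_of_nonneg_of_nonpos hip hD
      · refine ⟨i0, hi0', ?_⟩
        rw [Finset.mem_Icc] at hi0mem
        have hip : (0 : ℤ) < (i0 : ℤ) - p := by
          have : (p : ℤ) + 1 ≤ i0 := by exact_mod_cast hi0mem.1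
          omega
        exact mul_neg_of_pos_of_neg hip hi0
    simpa using hlt
  rw [← hdiff] at hneg
  have hfin := sub_neg.mp hneg
  exact_mod_cast hfin
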